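/- Let ν > 0 and set λ = ν/2. Define a(τ) = λ coth(ντ/2) and b(τ) = λ tanh(ντ/2) for τ ∈ (0, ∞). Then a and b satisfy the ODE system a'(τ) = −a(τ)(a(τ) − b(τ)) and b'(τ) = b(τ)(a(τ) − b(τ)), and a(τ) b(τ) = λ² for all τ > 0. Moreover, for any differentiable functions a, b on an open interval solving this ODE system, the product a·b is constant. -/

import Mathlib

/-- Fateev's k = 0 solution `a = λ coth(ντ/2)`, `b = λ tanh(ντ/2)` of the system
`a' = −a(a−b)`, `b' = b(a−b)`, together with the first integral `a·b = const`. -/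
theorem stmt_5 (ν lam : ℝ) (hν : 0 < ν) (hlam : lam = ν / 2)
    (a b : ℝ → ℝ)
    (hadef : ∀ τ, a τ = lam * (Real.cosh (ν * τ / 2) / Real.sinh (ν * τ / 2)))
    (hbdef : ∀ τ, b τ = lam * Real.tanh (ν * τ / 2)) :
    (∀ τ ∈ Set.Ioi (0 : ℝ), HasDerivAt a (-(a τ) * (a τ - b τ)) τ) ∧
    (∀ τ ∈ Set.Ioi (0 : ℝ), HasDerivAt b (b τ * (a τ - b τ)) τ) ∧
    (∀ τ ∈ Set.Ioi (0 : ℝ), a τ * b τ = lam ^ 2) ∧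
    (∀ (s t : ℝ) (a' b' : ℝ → ℝ),
      (∀ τ ∈ Set.Ioo s t, HasDerivAt a' (-(a' τ) * (a' τ - b' τ)) τ) →
      (∀ τ ∈ Set.Ioo s t, HasDerivAt b' (b' τ * (a' τ - b' τ)) τ) →
      ∃ C : ℝ, ∀ τ ∈ Set.Ioo s t, a' τ * b' τ = C) := by
  have harg : ∀ τ : ℝ, HasDerivAt (fun τ : ℝ => ν * τ / 2) (ν / 2) τ := by
    intro τ
    simpa using ((hasDerivAt_id τ).const_mul ν).div_const 2
  have hs : ∀ τ : ℝ, HasDerivAt (fun τ => Real.sinh (ν * τ / 2))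
      (Real.cosh (ν * τ / 2) * (ν / 2)) τ := fun τ =>
    (Real.hasDerivAt_sinh _).comp τ (harg τ)
  have hc : ∀ τ : ℝ, HasDerivAt (fun τ => Real.cosh (ν * τ / 2))
      (Real.sinh (ν * τ / 2) * (ν / 2)) τ := fun τ =>
    (Real.hasDerivAt_cosh _).comp τ (harg τ)
  have hsne : ∀ τ ∈ Set.Ioi (0 : ℝ), Real.sinh (ν * τ / 2) ≠ 0 := by
    intro τ hτ
    have hτ' : 0 < τ := hτ
    have : 0 < ν * τ / 2 := by positivity
    exact ne_of_gt (Real.sinh_pos_iff.mpr this)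
  have hcne : ∀ τ : ℝ, Real.cosh (ν * τ / 2) ≠ 0 := fun τ =>
    ne_of_gt (Real.cosh_pos _)
  have hid : ∀ τ : ℝ, Real.cosh (ν * τ / 2) ^ 2 - Real.sinh (ν * τ / 2) ^ 2 = 1 := by
    intro τ
    have := Real.cosh_sq_sub_sinh_sq (ν * τ / 2)
    nlinarith [this]
  refine ⟨?_, ?_, ?_, ?_⟩
  · intro τ hτ
    have h := (((hc τ).div (hs τ) (hsne τ hτ)).const_mul lam)
    have heq : ∀ x, a x = lam * (Real.cosh (ν * x / 2) / Real.sinh (ν * x / 2)) := hadef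
    have h2 : HasDerivAt a
        (lam * ((Real.sinh (ν * τ / 2) * (ν / 2) * Real.sinh (ν * τ / 2) -
          Real.cosh (ν * τ / 2) * (Real.cosh (ν * τ / 2) * (ν / 2))) /
          Real.sinh (ν * τ / 2) ^ 2)) τ := by
      have : a = fun x => lam * (Real.cosh (ν * x / 2) / Real.sinh (ν * x / 2)) :=
        funext heq
      rw [this]; exact h
    convert h2 using 1
    rw [hadef τ, hbdef τ, Real.tanh_eq_sinh_div_cosh]
    have hsn := hsne τ hτ
    have hcn := hcne τ
    have hidt := hid τ
    subst hlam
    field_simp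
    ring
  · intro τ hτ
    have h := (((hs τ).div (hc τ) (hcne τ)).const_mul lam)
    have h2 : HasDerivAt b
        (lam * ((Real.cosh (ν * τ / 2) * (ν / 2) * Real.cosh (ν * τ / 2) -
          Real.sinh (ν * τ / 2) * (Real.sinh (ν * τ / 2) * (ν / 2))) /
          Real.cosh (ν * τ / 2) ^ 2)) τ := by
      have : b = fun x => lam * (Real.sinh (ν * x / 2) / Real.cosh (ν * x / 2)) := by
        funext x; rw [hbdef x, Real.tanh_eq_sinh_div_cosh]
      rw [this]; exact h
    convert h2 using 1
    rw [hadef τ, hbdef τ, Real.tanh_eq_sinh_div_cosh]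
    have hsn := hsne τ hτ
    have hcn := hcne τ
    have hidt := hid τ
    subst hlam
    field_simp
  · intro τ hτ
    rw [hadef τ, hbdef τ, Real.tanh_eq_sinh_div_cosh]
    have hsn := hsne τ hτ
    have hcn := hcne τ
    have hidt := hid τ
    field_simp
  · intro s t a' b' ha hb
    rcases Set.eq_empty_or_nonempty (Set.Ioo s t) with he | ⟨x0, hx0⟩
    · exact ⟨0, fun τ hτ => absurd hτ (he ▸ Set.notMem_empty τ)⟩
    refine ⟨a' x0 * b' x0, fun τ hτ => ?_⟩
    have hderiv : ∀ x ∈ Set.Ioo s t, HasDerivAt (fun y => a' y * b' y) 0 x := by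
      intro x hx
      have : HasDerivAt (fun y => a' y * b' y) _ x := (ha x hx).mul (hb x hx)
      convert this using 1
      ring
    have hconv : Convex ℝ (Set.Ioo s t) := convex_Ioo s t
    have hdiff : DifferentiableOn ℝ (fun y => a' y * b' y) (Set.Ioo s t) :=
      fun x hx => ((hderiv x hx).differentiableAt).differentiableWithinAt
    have hfd : ∀ x ∈ Set.Ioo s t, fderivWithin ℝ (fun y => a' y * b' y) (Set.Ioo s t) x = 0 := by
      intro x hx
      have hu : UniqueDiffWithinAt ℝ (Set.Ioo s t) x := isOpen_Ioo.uniqueDiffWithinAt hx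
      have := ((hderiv x hx).hasFDerivAt.hasFDerivWithinAt).fderivWithin hu
      rw [this]
      ext
      simp
    exact hconv.is_const_of_fderivWithin_eq_zero hdiff hfd hτ hx0
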